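/- arXiv:1907.05679 — 2 statements merged into one kernel-verified Lean document; each statement's English description precedes it below -/
import Mathlib

section
/- Let A : ℝ → M_n(ℝ) be differentiable with A(t) symmetric for every t, let R : ℝ → M_n(ℝ) be differentiable with R(t) orthogonal for every t, let d₁, …, d_n : ℝ → ℝ be functions with d₁(t), …, d_n(t) pairwise distinct for every t, set D(t) = diag(d₁(t), …, d_n(t)), and assume A(t)R(t) = R(t)D(t) for every t. Let f : ℝ → ℝ be differentiable and define f(A)(t) := R(t)·diag(f(d₁(t)), …, f(d_n(t)))·R(t)ᵀ. Then the map t ↦ f(A)(t) is differentiable and for all indices j, k: if j ≠ k then (R(t)ᵀ (f(A))′(t) R(t))_{jk} = (R(t)ᵀ A′(t) R(t))_{jk} · (f(d_j(t)) − f(d_k(t)))/(d_j(t) − d_k(t)), and (R(t)ᵀ (f(A))′(t) R(t))_{jj} = (R(t)ᵀ A′(t) R(t))_{jj} · f′(d_j(t)). -/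
open Matrix

noncomputable section

private lemma aux_entry_deriv {n : ℕ} (R : ℝ → Matrix (Fin n) (Fin n) ℝ)
    (R' : Matrix (Fin n) (Fin n) ℝ) (t : ℝ) (e : Fin n → ℝ → ℝ) (e' : Fin n → ℝ)
    (hR : ∀ i j, HasDerivAt (fun s => R s i j) (R' i j) t)
    (he : ∀ m, HasDerivAt (e m) (e' m) t) (i j : Fin n) :
    HasDerivAt (fun s => (R s * Matrix.diagonal (fun m => e m s) * (R s)ᵀ) i j)
      ((R' * Matrix.diagonal (fun m => e m t) * (R t)ᵀ
        + R t * Matrix.diagonal e' * (R t)ᵀ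
        + R t * Matrix.diagonal (fun m => e m t) * R'ᵀ) i j) t := by
  have h1 : ∀ s, (R s * Matrix.diagonal (fun m => e m s) * (R s)ᵀ) i j
      = ∑ m, R s i m * e m s * R s j m := by
    intro s
    simp [Matrix.mul_apply, Matrix.diagonal_apply, Matrix.transpose_apply,
      Finset.sum_ite_eq, Finset.sum_ite_eq', mul_ite, ite_mul, mul_zero, zero_mul]
  simp only [h1]
  have h2 : (R' * Matrix.diagonal (fun m => e m t) * (R t)ᵀ
        + R t * Matrix.diagonal e' * (R t)ᵀ
        + R t * Matrix.diagonal (fun m => e m t) * R'ᵀ) i j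
      = ∑ m, ((R' i m * e m t + R t i m * e' m) * R t j m
              + R t i m * e m t * R' j m) := by
    simp only [Matrix.add_apply, Matrix.mul_apply, Matrix.diagonal_apply,
      Matrix.transpose_apply, mul_ite, ite_mul, mul_zero, zero_mul,
      Finset.sum_ite_eq, Finset.sum_ite_eq', Finset.mem_univ, if_true,
      ← Finset.sum_add_distrib]
    apply Finset.sum_congr rfl; intro m _; ring
  rw [h2]
  exact HasDerivAt.fun_sum fun m _ => ((hR i m).mul (he m)).mul (hR j m)

private lemma aux_conj {n : ℕ} (Rt R' : Matrix (Fin n) (Fin n) ℝ) (g h : Fin n → ℝ)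
    (h1 : Rtᵀ * Rt = 1) :
    Rtᵀ * (R' * Matrix.diagonal g * Rtᵀ + Rt * Matrix.diagonal h * Rtᵀ
        + Rt * Matrix.diagonal g * R'ᵀ) * Rt
    = (Rtᵀ * R') * Matrix.diagonal g + Matrix.diagonal h
      + Matrix.diagonal g * (Rtᵀ * R')ᵀ := by
  have key : ∀ X : Matrix (Fin n) (Fin n) ℝ, Rtᵀ * (X * Rtᵀ) * Rt = Rtᵀ * X := by
    intro X
    rw [mul_assoc Rtᵀ (X * Rtᵀ) Rt, mul_assoc X Rtᵀ Rt, h1, mul_one]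
  have e1 : Rtᵀ * (R' * Matrix.diagonal g * Rtᵀ) * Rt = Rtᵀ * R' * Matrix.diagonal g := by
    rw [key (R' * Matrix.diagonal g), ← mul_assoc]
  have e2 : Rtᵀ * (Rt * Matrix.diagonal h * Rtᵀ) * Rt = Matrix.diagonal h := by
    rw [key (Rt * Matrix.diagonal h), ← mul_assoc, h1, one_mul]
  have e3 : Rtᵀ * (Rt * Matrix.diagonal g * R'ᵀ) * Rt
      = Matrix.diagonal g * (Rtᵀ * R')ᵀ := by
    rw [transpose_mul, transpose_transpose]
    rw [show Rt * Matrix.diagonal g * R'ᵀ = (Rt * Matrix.diagonal g) * R'ᵀ from rfl,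
      ← mul_assoc Rtᵀ (Rt * Matrix.diagonal g) R'ᵀ, ← mul_assoc Rtᵀ Rt _, h1, one_mul,
      mul_assoc]
  rw [Matrix.mul_add, Matrix.mul_add, Matrix.add_mul, Matrix.add_mul, e1, e2, e3]


/-- Löwner's formula for the derivative of a matrix function
`f(A)(t) = R(t) diag(f(d₁(t)),…,f(dₙ(t))) R(t)ᵀ` along a differentiable family of
symmetric matrices with differentiable orthogonal diagonalization. -/
theorem loewner_derivative_formula {n : ℕ}
    (A A' R : ℝ → Matrix (Fin n) (Fin n) ℝ) (d : Fin n → ℝ → ℝ) (f : ℝ → ℝ)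
    (hAdiff : ∀ (t : ℝ) (i j : Fin n), HasDerivAt (fun s => A s i j) (A' t i j) t)
    (hAsym : ∀ t : ℝ, (A t)ᵀ = A t)
    (hRdiff : ∀ i j : Fin n, Differentiable ℝ (fun t => R t i j))
    (hRorth : ∀ t : ℝ, (R t)ᵀ * R t = 1)
    (hd : ∀ (t : ℝ) (j k : Fin n), j ≠ k → d j t ≠ d k t)
    (heig : ∀ t : ℝ, A t * R t = R t * Matrix.diagonal (fun j => d j t))
    (hf : Differentiable ℝ f) :
    ∃ F' : ℝ → Matrix (Fin n) (Fin n) ℝ,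
      (∀ (t : ℝ) (i j : Fin n),
        HasDerivAt
          (fun s => (R s * Matrix.diagonal (fun l => f (d l s)) * (R s)ᵀ) i j)
          (F' t i j) t) ∧
      (∀ (t : ℝ) (j k : Fin n), j ≠ k →
        ((R t)ᵀ * F' t * R t) j k
          = ((R t)ᵀ * A' t * R t) j k * ((f (d j t) - f (d k t)) / (d j t - d k t))) ∧
      (∀ (t : ℝ) (j : Fin n),
        ((R t)ᵀ * F' t * R t) j j
          = ((R t)ᵀ * A' t * R t) j j * deriv f (d j t)) := by
  -- entrywise derivative of R
  set R' : ℝ → Matrix (Fin n) (Fin n) ℝ :=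
    fun t => Matrix.of fun i j => deriv (fun s => R s i j) t with hR'def
  have hR' : ∀ (t : ℝ) (i j : Fin n), HasDerivAt (fun s => R s i j) (R' t i j) t :=
    fun t i j => ((hRdiff i j) t).hasDerivAt
  have hRRT : ∀ t, R t * (R t)ᵀ = 1 := fun t => mul_eq_one_comm.mp (hRorth t)
  -- A = R D Rᵀ
  have hA_eq : ∀ s, A s = R s * Matrix.diagonal (fun m => d m s) * (R s)ᵀ := by
    intro s
    rw [← heig s, mul_assoc, hRRT s, mul_one]
  -- D = Rᵀ A R, hence d j differentiable
  have hD : ∀ t, (R t)ᵀ * A t * R t = Matrix.diagonal (fun j => d j t) := by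
    intro t
    rw [mul_assoc, heig t, ← mul_assoc, hRorth t, one_mul]
  have hddiff : ∀ j, Differentiable ℝ (d j) := by
    intro j
    have h1 : d j = fun t => ∑ q, (∑ p, R t p j * A t p q) * R t q j := by
      funext t
      have := congrFun (congrFun (hD t) j) j
      simp only [Matrix.diagonal_apply_eq] at this
      rw [← this]
      simp [Matrix.mul_apply, Matrix.transpose_apply]
    rw [h1]
    apply Differentiable.fun_sum
    intro q _
    apply Differentiable.mul _ (hRdiff q j)
    apply Differentiable.fun_sum
    intro p _
    exact (hRdiff p j).mul (fun t => (hAdiff t p q).differentiableAt)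
  set d' : Fin n → ℝ → ℝ := fun j t => deriv (d j) t with hd'def
  have hd' : ∀ (j : Fin n) (t : ℝ), HasDerivAt (d j) (d' j t) t :=
    fun j t => (hddiff j t).hasDerivAt
  -- S = Rᵀ R' is skew
  have hskew : ∀ (t : ℝ) (j k : Fin n), ((R t)ᵀ * R' t) k j = - ((R t)ᵀ * R' t) j k := by
    intro t j k
    have hconst : (fun s => ∑ p, R s p j * R s p k)
        = fun _ => (1 : Matrix (Fin n) (Fin n) ℝ) j k := by
      funext s
      rw [← hRorth s]
      simp [Matrix.mul_apply, Matrix.transpose_apply]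
    have h0 : HasDerivAt (fun s => ∑ p, R s p j * R s p k) 0 t := by
      rw [hconst]; exact hasDerivAt_const t _
    have h1 : HasDerivAt (fun s => ∑ p, R s p j * R s p k)
        (∑ p, (R' t p j * R t p k + R t p j * R' t p k)) t :=
      HasDerivAt.fun_sum fun p _ => (hR' t p j).mul (hR' t p k)
    have h2 : (∑ p, (R' t p j * R t p k + R t p j * R' t p k)) = 0 := h1.unique h0
    have h3 : ((R t)ᵀ * R' t) k j + ((R t)ᵀ * R' t) j k
        = ∑ p, (R' t p j * R t p k + R t p j * R' t p k) := by
      simp only [Matrix.mul_apply, Matrix.transpose_apply, ← Finset.sum_add_distrib]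
      apply Finset.sum_congr rfl; intro p _; ring
    rw [h2] at h3
    linarith
  -- A' identified
  have hA' : ∀ t, A' t = R' t * Matrix.diagonal (fun m => d m t) * (R t)ᵀ
      + R t * Matrix.diagonal (fun m => d' m t) * (R t)ᵀ
      + R t * Matrix.diagonal (fun m => d m t) * (R' t)ᵀ := by
    intro t
    ext i j
    have h1 := aux_entry_deriv R (R' t) t (fun m s => d m s) (fun m => d' m t)
      (hR' t) (fun m => hd' m t) i j
    have h2 : (fun s => (R s * Matrix.diagonal (fun m => d m s) * (R s)ᵀ) i j)
        = fun s => A s i j := by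
      funext s; rw [← hA_eq s]
    rw [h2] at h1
    exact (hAdiff t i j).unique h1
  -- the candidate derivative
  refine ⟨fun t => R' t * Matrix.diagonal (fun m => f (d m t)) * (R t)ᵀ
      + R t * Matrix.diagonal (fun m => deriv f (d m t) * d' m t) * (R t)ᵀ
      + R t * Matrix.diagonal (fun m => f (d m t)) * (R' t)ᵀ, ?_, ?_, ?_⟩
  · intro t i j
    exact aux_entry_deriv R (R' t) t (fun m s => f (d m s))
      (fun m => deriv f (d m t) * d' m t) (hR' t)
      (fun m => ((hf (d m t)).hasDerivAt.comp t (hd' m t))) i j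
  · -- off-diagonal
    intro t j k hjk
    have hF := aux_conj (R t) (R' t) (fun m => f (d m t))
      (fun m => deriv f (d m t) * d' m t) (hRorth t)
    have hAc : (R t)ᵀ * A' t * R t
        = ((R t)ᵀ * R' t) * Matrix.diagonal (fun m => d m t)
          + Matrix.diagonal (fun m => d' m t)
          + Matrix.diagonal (fun m => d m t) * ((R t)ᵀ * R' t)ᵀ := by
      rw [hA' t]
      exact aux_conj (R t) (R' t) (fun m => d m t) (fun m => d' m t) (hRorth t)
    rw [hF, hAc]
    simp only [Matrix.add_apply, Matrix.mul_diagonal, Matrix.diagonal_mul,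
      Matrix.diagonal_apply, Matrix.transpose_apply, hjk, if_false]
    rw [hskew t j k]
    have hne : d j t - d k t ≠ 0 := sub_ne_zero.mpr (hd t j k hjk)
    field_simp
    ring
  · -- diagonal
    intro t j
    have hF := aux_conj (R t) (R' t) (fun m => f (d m t))
      (fun m => deriv f (d m t) * d' m t) (hRorth t)
    have hAc : (R t)ᵀ * A' t * R t
        = ((R t)ᵀ * R' t) * Matrix.diagonal (fun m => d m t)
          + Matrix.diagonal (fun m => d' m t)
          + Matrix.diagonal (fun m => d m t) * ((R t)ᵀ * R' t)ᵀ := by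
      rw [hA' t]
      exact aux_conj (R t) (R' t) (fun m => d m t) (fun m => d' m t) (hRorth t)
    rw [hF, hAc]
    have hS0 : ((R t)ᵀ * R' t) j j = 0 := by have := hskew t j j; linarith
    simp only [Matrix.add_apply, Matrix.mul_diagonal, Matrix.diagonal_mul,
      Matrix.diagonal_apply_eq, Matrix.transpose_apply, hS0]
    ring
end
end

section
/- Let 0 < p ≤ 1 and let A : ℝ → M_n(ℝ) be such that A(t) is symmetric positive definite for every t, A is differentiable at t₀ with derivative A′(t₀) symmetric positive definite. If the map t ↦ A(t)^p is differentiable at t₀ with derivative S, then S is positive definite. -/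
open Matrix

noncomputable section

/-- The real power `A^p` of a symmetric matrix, defined by the spectral functional
calculus: diagonalize and apply `t ↦ t ^ p` to the eigenvalues. -/
def herPow {n : ℕ} (A : Matrix (Fin n) (Fin n) ℝ) (hA : A.IsHermitian) (p : ℝ) :
    Matrix (Fin n) (Fin n) ℝ :=
  hA.eigenvectorUnitary.1 *
    Matrix.diagonal (fun i => hA.eigenvalues i ^ p) *
    (star hA.eigenvectorUnitary : Matrix (Fin n) (Fin n) ℝ)

namespace HerPowAux
open MeasureTheory Set Filter

variable {n : ℕ} {p : ℝ}

/-! ### Scalar integral representation of `x ^ p`, `0 < p < 1` -/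

def Ip (p : ℝ) : ℝ := ∫ s in Ioi (0:ℝ), s ^ (p-1) * (1 / (1 + s))

lemma integrableOn_kernel (hp0 : 0 < p) (hp1 : p < 1) {x : ℝ} (hx : 0 < x) :
    IntegrableOn (fun s => s ^ (p-1) * (x / (x + s))) (Ioi 0) := by
  have hmeas : AEStronglyMeasurable (fun s : ℝ => s ^ (p-1) * (x / (x + s)))
      (volume.restrict (Ioi (0:ℝ))) := by
    refine (ContinuousOn.aestronglyMeasurable ?_ measurableSet_Ioi)
    intro s hs
    have hs0 : (0:ℝ) < s := hs
    exact ((Real.continuousAt_rpow_const s (p-1) (Or.inl hs0.ne')).mul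
      ((continuousAt_const.div (continuousAt_const.add continuousAt_id)
        (by show x + s ≠ 0; positivity)))).continuousWithinAt
  have h1 : IntegrableOn (fun s => s ^ (p-1) * (x / (x + s))) (Ioc (0:ℝ) 1) := by
    have hbase : IntegrableOn (fun s : ℝ => s ^ (p-1)) (Ioc (0:ℝ) 1) := by
      have := intervalIntegral.intervalIntegrable_rpow' (r := p-1) (a := 0) (b := 1)
        (by linarith)
      rwa [intervalIntegrable_iff_integrableOn_Ioc_of_le (by norm_num)] at this
    refine hbase.integrable.mono' (hmeas.mono_measure ?_) ?_
    · exact Measure.restrict_mono Ioc_subset_Ioi_self le_rfl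
    · filter_upwards [ae_restrict_mem measurableSet_Ioc] with s hs
      have hs0 : (0:ℝ) < s := hs.1
      have h2 : x / (x + s) ≤ 1 := by
        rw [div_le_one (by linarith)]; linarith
      have h3 : 0 ≤ x / (x + s) := by positivity
      calc ‖s ^ (p-1) * (x / (x + s))‖ = s ^ (p-1) * (x / (x + s)) := by
            rw [Real.norm_eq_abs, abs_of_nonneg (by positivity)]
        _ ≤ s ^ (p-1) * 1 := mul_le_mul_of_nonneg_left h2 (Real.rpow_nonneg hs0.le _)
        _ = s ^ (p-1) := mul_one _
  have h2 : IntegrableOn (fun s => s ^ (p-1) * (x / (x + s))) (Ioi (1:ℝ)) := by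
    have hbase : IntegrableOn (fun s : ℝ => x * s ^ (p-2)) (Ioi (1:ℝ)) :=
      (integrableOn_Ioi_rpow_of_lt (by linarith) one_pos).const_mul x
    refine hbase.integrable.mono' (hmeas.mono_measure ?_) ?_
    · exact Measure.restrict_mono (Ioi_subset_Ioi zero_le_one) le_rfl
    · filter_upwards [ae_restrict_mem measurableSet_Ioi] with s hs
      have hs1 : (1:ℝ) < s := hs
      have hs0 : (0:ℝ) < s := by linarith
      have h4 : x / (x + s) ≤ x / s := by
        apply div_le_div_of_nonneg_left hx.le hs0; linarith
      have h5 : s ^ (p-1) * (x / s) = x * s ^ (p-2) := by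
        have h6 : s ^ (p-2) = s ^ (p-1) * s⁻¹ := by
          rw [← Real.rpow_neg_one s, ← Real.rpow_add hs0]
          ring_nf
        rw [h6]; ring
      calc ‖s ^ (p-1) * (x / (x + s))‖ = s ^ (p-1) * (x / (x + s)) := by
            rw [Real.norm_eq_abs, abs_of_nonneg (by positivity)]
        _ ≤ s ^ (p-1) * (x / s) :=
            mul_le_mul_of_nonneg_left h4 (Real.rpow_nonneg hs0.le _)
        _ = x * s ^ (p-2) := h5
  have : Ioi (0:ℝ) = Ioc 0 1 ∪ Ioi 1 := (Ioc_union_Ioi_eq_Ioi zero_le_one).symm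
  rw [this]
  exact h1.union h2

lemma kernel_integral (hp0 : 0 < p) (hp1 : p < 1) {x : ℝ} (hx : 0 < x) :
    ∫ s in Ioi (0:ℝ), s ^ (p-1) * (x / (x + s)) = x ^ p * Ip p := by
  have hsub := integral_comp_mul_left_Ioi (fun s => s ^ (p-1) * (x / (x + s))) 0 hx
  rw [mul_zero] at hsub
  have hcongr : ∫ u in Ioi (0:ℝ), (x*u) ^ (p-1) * (x / (x + x*u))
      = ∫ u in Ioi (0:ℝ), x ^ (p-1) * (u ^ (p-1) * (1 / (1+u))) := by
    refine setIntegral_congr_fun measurableSet_Ioi (fun u hu => ?_)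
    have hu0 : (0:ℝ) < u := hu
    rw [Real.mul_rpow hx.le hu0.le]
    have h1 : x / (x + x*u) = 1 / (1+u) := by
      rw [div_eq_div_iff (by nlinarith) (by nlinarith)]; ring
    rw [h1]; ring
  rw [hcongr, MeasureTheory.integral_const_mul] at hsub
  have hxp : x ^ p = x * x ^ (p-1) := by
    nth_rewrite 2 [← Real.rpow_one x]
    rw [← Real.rpow_add hx]; ring_nf
  rw [smul_eq_mul] at hsub
  have := congrArg (fun y => x * y) hsub
  rw [← mul_assoc (x) (x⁻¹), mul_inv_cancel₀ hx.ne', one_mul] at this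
  rw [← this, Ip, hxp]; ring

lemma Ip_pos (hp0 : 0 < p) (hp1 : p < 1) : 0 < Ip p := by
  have hint : IntegrableOn (fun s : ℝ => s ^ (p-1) * (1 / (1 + s))) (Ioi 0) :=
    integrableOn_kernel hp0 hp1 one_pos
  have hnn : ∀ s ∈ Ioi (0:ℝ), 0 ≤ s ^ (p-1) * (1 / (1 + s)) := by
    intro s hs
    have : (0:ℝ) < s := hs
    positivity
  have hsb : Ioc (1:ℝ) 2 ⊆ Ioi (0:ℝ) := fun s hs => lt_trans one_pos hs.1
  have hlow : ∀ s ∈ Ioc (1:ℝ) 2, (2:ℝ) ^ (p-1) * (1/3) ≤ s ^ (p-1) * (1 / (1 + s)) := by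
    intro s hs
    have hs1 : (1:ℝ) < s := hs.1
    have hs2 : s ≤ 2 := hs.2
    have h1 : (2:ℝ) ^ (p-1) ≤ s ^ (p-1) := by
      apply Real.rpow_le_rpow_of_nonpos (by linarith) hs2 (by linarith)
    have h2 : (1:ℝ)/3 ≤ 1/(1+s) := by
      rw [div_le_div_iff₀ (by norm_num) (by linarith)]; linarith
    have := mul_le_mul h1 h2 (by norm_num) (Real.rpow_nonneg (by linarith) _)
    linarith
  have hc : (0:ℝ) < 2 ^ (p-1) * (1/3) := by positivity
  have step1 : (2:ℝ) ^ (p-1) * (1/3) * 1 ≤ ∫ s in Ioc (1:ℝ) 2, s ^ (p-1) * (1/(1+s)) := by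
    have := setIntegral_mono_on (f := fun _ : ℝ => (2:ℝ) ^ (p-1) * (1/3))
      (g := fun s : ℝ => s ^ (p-1) * (1/(1+s)))
      (integrableOn_const (by simp))
      (hint.mono_set hsb) measurableSet_Ioc hlow
    calc (2:ℝ) ^ (p-1) * (1/3) * 1
        = ∫ _ in Ioc (1:ℝ) 2, (2:ℝ) ^ (p-1) * (1/3) := by
          rw [setIntegral_const]; simp [Real.volume_Ioc]; ring
      _ ≤ _ := this
  have step2 : ∫ s in Ioc (1:ℝ) 2, s ^ (p-1) * (1/(1+s)) ≤ Ip p := by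
    apply setIntegral_mono_set hint
    · filter_upwards [ae_restrict_mem measurableSet_Ioi] with s hs using hnn s hs
    · exact HasSubset.Subset.eventuallyLE hsb
  rw [Ip] at *
  linarith

/-! ### Transport through the eigenvector unitary -/

lemma dot_unitary (U : Matrix (Fin n) (Fin n) ℝ) (hU : Uᵀ * U = 1) (a b : Fin n → ℝ) :
    (U *ᵥ a) ⬝ᵥ (U *ᵥ b) = a ⬝ᵥ b := by
  calc (U *ᵥ a) ⬝ᵥ (U *ᵥ b) = vecMul (U *ᵥ a) U ⬝ᵥ b := dotProduct_mulVec _ _ _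
    _ = (Uᵀ *ᵥ (U *ᵥ a)) ⬝ᵥ b := by rw [mulVec_transpose]
    _ = ((Uᵀ * U) *ᵥ a) ⬝ᵥ b := by rw [mulVec_mulVec]
    _ = a ⬝ᵥ b := by rw [hU, one_mulVec]

lemma quad_decomp (U : Matrix (Fin n) (Fin n) ℝ) (hU : Uᵀ * U = 1) (d a : Fin n → ℝ) :
    (U *ᵥ a) ⬝ᵥ ((U * diagonal d * Uᵀ) *ᵥ (U *ᵥ a)) = ∑ i, d i * (a i)^2 := by
  have h1 : (U * diagonal d * Uᵀ) *ᵥ (U *ᵥ a) = U *ᵥ (diagonal d *ᵥ a) := by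
    rw [mulVec_mulVec, mul_assoc, mul_assoc, ← mulVec_mulVec]
    rw [show Uᵀ * U = 1 from hU]
    rw [mul_one]
  rw [h1, dot_unitary U hU]
  simp [dotProduct, mulVec_diagonal]
  exact Finset.sum_congr rfl fun i _ => by ring

lemma recover (U : Matrix (Fin n) (Fin n) ℝ) (hU : U * Uᵀ = 1) (u : Fin n → ℝ) :
    U *ᵥ (Uᵀ *ᵥ u) = u := by
  rw [mulVec_mulVec, hU, one_mulVec]

/-- the orthogonal eigenvector matrix, as a plain real matrix -/
abbrev eU {X : Matrix (Fin n) (Fin n) ℝ} (hX : X.IsHermitian) : Matrix (Fin n) (Fin n) ℝ :=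
  hX.eigenvectorUnitary.1

lemma eU_left {X : Matrix (Fin n) (Fin n) ℝ} (hX : X.IsHermitian) : (eU hX)ᵀ * eU hX = 1 := by
  have := hX.eigenvectorUnitary.2
  rw [Unitary.mem_iff] at this
  have h := this.1
  rwa [Matrix.star_eq_conjTranspose, conjTranspose_eq_transpose_of_trivial] at h

lemma eU_right {X : Matrix (Fin n) (Fin n) ℝ} (hX : X.IsHermitian) : eU hX * (eU hX)ᵀ = 1 := by
  have := hX.eigenvectorUnitary.2
  rw [Unitary.mem_iff] at this
  have h := this.2
  rwa [Matrix.star_eq_conjTranspose, conjTranspose_eq_transpose_of_trivial] at h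

lemma spectral_real {X : Matrix (Fin n) (Fin n) ℝ} (hX : X.IsHermitian) :
    X = eU hX * diagonal hX.eigenvalues * (eU hX)ᵀ := by
  have := hX.spectral_theorem
  rwa [Unitary.conjStarAlgAut_apply, Matrix.star_eq_conjTranspose, conjTranspose_eq_transpose_of_trivial,
    RCLike.ofReal_real_eq_id] at this

def herPow' {X : Matrix (Fin n) (Fin n) ℝ} (hX : X.IsHermitian) (p : ℝ) :
    Matrix (Fin n) (Fin n) ℝ :=
  eU hX * diagonal (fun i => hX.eigenvalues i ^ p) * (eU hX)ᵀ

lemma herPow_eq {X : Matrix (Fin n) (Fin n) ℝ} (hX : X.IsHermitian) (p : ℝ) :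
    herPow X hX p = herPow' hX p := by
  have h : (star hX.eigenvectorUnitary : Matrix (Fin n) (Fin n) ℝ) = (eU hX)ᵀ := by
    rw [show (star hX.eigenvectorUnitary : Matrix (Fin n) (Fin n) ℝ)
        = star (hX.eigenvectorUnitary.1) from rfl,
      Matrix.star_eq_conjTranspose, conjTranspose_eq_transpose_of_trivial]
  rw [herPow, herPow', h]

lemma herPow'_transpose {X : Matrix (Fin n) (Fin n) ℝ} (hX : X.IsHermitian) (p : ℝ) :
    (herPow' hX p)ᵀ = herPow' hX p := by
  rw [herPow']
  rw [transpose_mul, transpose_mul, transpose_transpose, diagonal_transpose]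
  exact (mul_assoc _ _ _).symm

lemma quad_X {X : Matrix (Fin n) (Fin n) ℝ} (hX : X.IsHermitian) (a : Fin n → ℝ) :
    (eU hX *ᵥ a) ⬝ᵥ (X *ᵥ (eU hX *ᵥ a)) = ∑ i, hX.eigenvalues i * (a i)^2 := by
  nth_rewrite 2 [spectral_real hX]
  exact quad_decomp _ (eU_left hX) _ a

lemma quad_herPow {X : Matrix (Fin n) (Fin n) ℝ} (hX : X.IsHermitian) (p : ℝ) (a : Fin n → ℝ) :
    (eU hX *ᵥ a) ⬝ᵥ (herPow' hX p *ᵥ (eU hX *ᵥ a)) = ∑ i, hX.eigenvalues i ^ p * (a i)^2 :=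
  quad_decomp _ (eU_left hX) _ a

lemma dot_eU_t {X : Matrix (Fin n) (Fin n) ℝ} (hX : X.IsHermitian) (a b : Fin n → ℝ) :
    ((eU hX)ᵀ *ᵥ a) ⬝ᵥ ((eU hX)ᵀ *ᵥ b) = a ⬝ᵥ b := by
  apply dot_unitary
  rw [transpose_transpose]; exact eU_right hX

lemma elem_upper {c z a : ℝ} (hc : 0 < c) : 2*a*z - c*a^2 ≤ z^2/c := by
  rw [le_div_iff₀ hc]; nlinarith [sq_nonneg (z - c*a)]

/-- the sup-characterization inequality: G_X(s) ≤ G_B(s+ε). -/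
lemma G_ineq {B X : Matrix (Fin n) (Fin n) ℝ} (hB : B.PosDef) (hX : X.PosDef)
    (v : Fin n → ℝ) {ε : ℝ} (hε : 0 ≤ ε) {s : ℝ} (hs : 0 < s)
    (hcmp : ∀ u : Fin n → ℝ, u ⬝ᵥ (B *ᵥ u) + ε * (u ⬝ᵥ u) ≤ u ⬝ᵥ (X *ᵥ u)) :
    ∑ i, (((eU hX.1)ᵀ *ᵥ v) i)^2 / (hX.1.eigenvalues i + s)
      ≤ ∑ i, (((eU hB.1)ᵀ *ᵥ v) i)^2 / (hB.1.eigenvalues i + ε + s) := by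
  set μ := hX.1.eigenvalues with hμ
  set lam := hB.1.eigenvalues with hlam
  set z : Fin n → ℝ := (eU hX.1)ᵀ *ᵥ v with hz
  set w : Fin n → ℝ := (eU hB.1)ᵀ *ᵥ v with hw
  have hμpos : ∀ i, 0 < μ i + s := fun i => by
    have := hX.eigenvalues_pos i; rw [← hμ] at this; linarith
  have hlampos : ∀ i, 0 < lam i + ε + s := fun i => by
    have := hB.eigenvalues_pos i; linarith
  set a : Fin n → ℝ := fun i => z i / (μ i + s) with ha
  set u : Fin n → ℝ := eU hX.1 *ᵥ a with hu
  have hvz : v = eU hX.1 *ᵥ z := (recover _ (eU_right hX.1) v).symm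
  have hvw : v = eU hB.1 *ᵥ w := (recover _ (eU_right hB.1) v).symm
  set b : Fin n → ℝ := (eU hB.1)ᵀ *ᵥ u with hb
  have hub : u = eU hB.1 *ᵥ b := (recover _ (eU_right hB.1) u).symm
  -- e-lemmas
  have e1 : u ⬝ᵥ (X *ᵥ u) = ∑ i, μ i * (a i)^2 := quad_X hX.1 a
  have e2 : u ⬝ᵥ v = a ⬝ᵥ z := by rw [hu, hvz]; exact dot_unitary _ (eU_left hX.1) a z
  have e3 : u ⬝ᵥ u = a ⬝ᵥ a := by rw [hu]; exact dot_unitary _ (eU_left hX.1) a a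
  have e5 : u ⬝ᵥ (B *ᵥ u) = ∑ i, lam i * (b i)^2 := by
    rw [hub]; exact quad_X hB.1 b
  have e6 : u ⬝ᵥ v = b ⬝ᵥ w := by
    rw [hub, hvw]; exact dot_unitary _ (eU_left hB.1) b w
  have e7 : u ⬝ᵥ u = b ⬝ᵥ b := by
    rw [hub]; exact dot_unitary _ (eU_left hB.1) b b
  have step1 : ∑ i, (z i)^2 / (μ i + s) = 2*(u ⬝ᵥ v) - u ⬝ᵥ (X *ᵥ u) - s*(u ⬝ᵥ u) := by
    rw [e1, e2, e3, dotProduct, dotProduct, Finset.mul_sum, Finset.mul_sum,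
      ← Finset.sum_sub_distrib, ← Finset.sum_sub_distrib]
    refine Finset.sum_congr rfl fun i _ => ?_
    have h := (hμpos i).ne'
    simp only [ha]
    field_simp
    ring
  have step2 : 2*(u ⬝ᵥ v) - u ⬝ᵥ (X *ᵥ u) - s*(u ⬝ᵥ u)
      ≤ 2*(u ⬝ᵥ v) - u ⬝ᵥ (B *ᵥ u) - (s+ε)*(u ⬝ᵥ u) := by
    have := hcmp u; nlinarith [this]
  have step3 : 2*(u ⬝ᵥ v) - u ⬝ᵥ (B *ᵥ u) - (s+ε)*(u ⬝ᵥ u)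
      ≤ ∑ i, (w i)^2 / (lam i + ε + s) := by
    rw [e5, e6, e7, dotProduct, dotProduct, Finset.mul_sum, Finset.mul_sum,
      ← Finset.sum_sub_distrib, ← Finset.sum_sub_distrib]
    refine Finset.sum_le_sum fun i _ => ?_
    have h := elem_upper (c := lam i + ε + s) (z := w i) (a := b i) (hlampos i)
    nlinarith [h]
  linarith [step1, step2, step3]


lemma key {n : ℕ} {p : ℝ} (hp0 : 0 < p) (hp1 : p < 1)
    {B X : Matrix (Fin n) (Fin n) ℝ} (hB : B.PosDef) (hX : X.PosDef)
    (v : Fin n → ℝ) {ε : ℝ} (hε : 0 ≤ ε)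
    (hcmp : ∀ u : Fin n → ℝ, u ⬝ᵥ (B *ᵥ u) + ε * (u ⬝ᵥ u) ≤ u ⬝ᵥ (X *ᵥ u)) :
    ∑ i, (hB.1.eigenvalues i + ε) ^ p * (((eU hB.1)ᵀ *ᵥ v) i)^2
      ≤ v ⬝ᵥ (herPow' hX.1 p *ᵥ v) := by
  set μ := hX.1.eigenvalues with hμ
  set lam := hB.1.eigenvalues with hlam
  set z : Fin n → ℝ := (eU hX.1)ᵀ *ᵥ v with hz
  set w : Fin n → ℝ := (eU hB.1)ᵀ *ᵥ v with hw
  have hμpos : ∀ i, 0 < μ i := fun i => hX.eigenvalues_pos i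
  have hlampos : ∀ i, 0 < lam i + ε := fun i => by
    have := hB.eigenvalues_pos i; rw [← hlam] at this; linarith
  have hvz : v = eU hX.1 *ᵥ z := (recover _ (eU_right hX.1) v).symm
  have hRHS : v ⬝ᵥ (herPow' hX.1 p *ᵥ v) = ∑ i, μ i ^ p * (z i)^2 := by
    rw [hvz]; exact quad_herPow hX.1 p z
  have hnorm : ∑ i, (w i)^2 = ∑ i, (z i)^2 := by
    have h1 : ∑ i, (w i)^2 = w ⬝ᵥ w := by simp [dotProduct, pow_two]
    have h2 : ∑ i, (z i)^2 = z ⬝ᵥ z := by simp [dotProduct, pow_two]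
    rw [h1, h2, hw, hz, dot_eU_t, dot_eU_t]
  set Φ : ℝ → ℝ := fun s => ∑ i, (z i)^2 * (s ^ (p-1) * (μ i / (μ i + s))) with hΦ
  set Ψ : ℝ → ℝ := fun s => ∑ i, (w i)^2 * (s ^ (p-1) * ((lam i + ε) / (lam i + ε + s))) with hΨ
  have hΦint : IntegrableOn Φ (Ioi 0) := by
    apply MeasureTheory.integrable_finset_sum
    intro i _
    exact (integrableOn_kernel hp0 hp1 (hμpos i)).const_mul _
  have hΨint : IntegrableOn Ψ (Ioi 0) := by
    apply MeasureTheory.integrable_finset_sum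
    intro i _
    exact (integrableOn_kernel hp0 hp1 (hlampos i)).const_mul _
  have hΦval : ∫ s in Ioi (0:ℝ), Φ s = (∑ i, μ i ^ p * (z i)^2) * Ip p := by
    rw [MeasureTheory.integral_finset_sum _
      (fun i _ => (integrableOn_kernel hp0 hp1 (hμpos i)).const_mul _)]
    rw [Finset.sum_mul]
    refine Finset.sum_congr rfl fun i _ => ?_
    rw [MeasureTheory.integral_const_mul, kernel_integral hp0 hp1 (hμpos i)]
    ring
  have hΨval : ∫ s in Ioi (0:ℝ), Ψ s = (∑ i, (lam i + ε) ^ p * (w i)^2) * Ip p := by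
    rw [MeasureTheory.integral_finset_sum _
      (fun i _ => (integrableOn_kernel hp0 hp1 (hlampos i)).const_mul _)]
    rw [Finset.sum_mul]
    refine Finset.sum_congr rfl fun i _ => ?_
    rw [MeasureTheory.integral_const_mul, kernel_integral hp0 hp1 (hlampos i)]
    ring
  have hpoint : ∀ s ∈ Ioi (0:ℝ), Ψ s ≤ Φ s := by
    intro s hs
    have hs0 : (0:ℝ) < s := hs
    have split : ∀ (c x : ℝ), 0 < x + s → c^2 * (x / (x + s)) = c^2 - s * (c^2 / (x + s)) := by
      intro c x hx
      field_simp
      ring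
    have hG := G_ineq hB hX v hε hs0 hcmp
    rw [← hz, ← hw, ← hμ, ← hlam] at hG
    have hΦeq : Φ s = s ^ (p-1) * (∑ i, (z i)^2 - s * ∑ i, (z i)^2 / (μ i + s)) := by
      calc Φ s = ∑ i, s ^ (p-1) * ((z i)^2 - s*((z i)^2/(μ i + s))) :=
            Finset.sum_congr rfl fun i _ => by
              have hxi : (0:ℝ) < μ i + s := by linarith [hμpos i]
              field_simp
              ring
        _ = s ^ (p-1) * (∑ i, (z i)^2 - s * ∑ i, (z i)^2/(μ i + s)) := by
            rw [← Finset.mul_sum, Finset.sum_sub_distrib, ← Finset.mul_sum]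
    have hΨeq : Ψ s = s ^ (p-1) * (∑ i, (w i)^2 - s * ∑ i, (w i)^2 / (lam i + ε + s)) := by
      calc Ψ s = ∑ i, s ^ (p-1) * ((w i)^2 - s*((w i)^2/(lam i + ε + s))) :=
            Finset.sum_congr rfl fun i _ => by
              have hxi : (0:ℝ) < lam i + ε + s := by linarith [hlampos i]
              field_simp
              ring
        _ = s ^ (p-1) * (∑ i, (w i)^2 - s * ∑ i, (w i)^2/(lam i + ε + s)) := by
            rw [← Finset.mul_sum, Finset.sum_sub_distrib, ← Finset.mul_sum]
    rw [hΦeq, hΨeq, hnorm]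
    apply mul_le_mul_of_nonneg_left _ (Real.rpow_nonneg hs0.le _)
    nlinarith [hG, hs0]
  have hle := setIntegral_mono_on hΨint hΦint measurableSet_Ioi hpoint
  rw [hΦval, hΨval] at hle
  have hfin := le_of_mul_le_mul_right hle (Ip_pos hp0 hp1)
  rw [hRHS]
  exact hfin


lemma rpow_gain (hp0 : 0 < p) (hp1 : p < 1) {M x ε : ℝ} (hx0 : 0 < x) (hxM : x ≤ M)
    (hε0 : 0 < ε) (hε1 : ε ≤ 1) : p * (M+1) ^ (p-1) * ε ≤ (x+ε) ^ p - x ^ p := by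
  have hM0 : 0 < M := lt_of_lt_of_le hx0 hxM
  have hcont : ContinuousOn (fun y : ℝ => y ^ p) (Icc x (x+ε)) := by
    intro y hy
    have hy0 : 0 < y := lt_of_lt_of_le hx0 hy.1
    exact (Real.continuousAt_rpow_const y p (Or.inl hy0.ne')).continuousWithinAt
  have hderiv : ∀ y ∈ Ioo x (x+ε), HasDerivAt (fun y : ℝ => y ^ p) (p * y ^ (p-1)) y := by
    intro y hy
    have hy0 : 0 < y := lt_trans hx0 hy.1
    exact Real.hasDerivAt_rpow_const (Or.inl hy0.ne')
  obtain ⟨c, hc, hceq⟩ := exists_hasDerivAt_eq_slope (fun y : ℝ => y ^ p)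
    (fun y => p * y ^ (p-1)) (by linarith) hcont hderiv
  have hc0 : 0 < c := lt_trans hx0 hc.1
  have hcM : c ≤ M + 1 := by have := hc.2; linarith
  have hmono : (M+1) ^ (p-1) ≤ c ^ (p-1) :=
    Real.rpow_le_rpow_of_nonpos hc0 hcM (by linarith)
  have hslope : (x+ε) ^ p - x ^ p = p * c ^ (p-1) * ε := by
    have hne : x + ε - x = ε := by ring
    rw [hne] at hceq
    field_simp at hceq
    linarith [hceq]
  rw [hslope]
  have : p * (M+1)^(p-1) ≤ p * c ^ (p-1) := by
    apply mul_le_mul_of_nonneg_left hmono hp0.le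
  nlinarith [this, hε0]

/-- crude quadratic form bound by the ℓ¹ norm of entries -/
lemma quad_abs (M : Matrix (Fin n) (Fin n) ℝ) (u : Fin n → ℝ) :
    |u ⬝ᵥ (M *ᵥ u)| ≤ (∑ i, ∑ j, |M i j|) * (u ⬝ᵥ u) := by
  have hexp : u ⬝ᵥ (M *ᵥ u) = ∑ i, ∑ j, u i * M i j * u j := by
    simp [dotProduct, mulVec, Finset.mul_sum]
    exact Finset.sum_congr rfl fun i _ => Finset.sum_congr rfl fun j _ => by ring
  rw [hexp, Finset.sum_mul]
  refine le_trans (Finset.abs_sum_le_sum_abs _ _) (Finset.sum_le_sum fun i _ => ?_)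
  rw [Finset.sum_mul]
  refine le_trans (Finset.abs_sum_le_sum_abs _ _) (Finset.sum_le_sum fun j _ => ?_)
  rw [abs_mul, abs_mul]
  have h1 : |u i| * |u j| ≤ u ⬝ᵥ u := by
    have hii : (u i)^2 ≤ u ⬝ᵥ u := by
      rw [dotProduct]
      have := Finset.single_le_sum (f := fun k => u k * u k)
        (fun k _ => mul_self_nonneg (u k)) (Finset.mem_univ i)
      rw [pow_two]; exact this
    have hjj : (u j)^2 ≤ u ⬝ᵥ u := by
      rw [dotProduct]
      have := Finset.single_le_sum (f := fun k => u k * u k)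
        (fun k _ => mul_self_nonneg (u k)) (Finset.mem_univ j)
      rw [pow_two]; exact this
    nlinarith [abs_nonneg (u i), abs_nonneg (u j), sq_abs (u i), sq_abs (u j),
      sq_nonneg (|u i| - |u j|)]
  calc |u i| * |M i j| * |u j| = |M i j| * (|u i| * |u j|) := by ring
    _ ≤ |M i j| * (u ⬝ᵥ u) := mul_le_mul_of_nonneg_left h1 (abs_nonneg _)


lemma eigen_le {B : Matrix (Fin n) (Fin n) ℝ} (hB : B.PosDef) (i : Fin n) :
    hB.1.eigenvalues i ≤ ∑ k, ∑ j, |B k j| := by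
  have h := quad_X hB.1 (Pi.single i 1)
  have hval : ∑ j, hB.1.eigenvalues j * ((Pi.single i 1 : Fin n → ℝ) j)^2
      = hB.1.eigenvalues i := by
    rw [Finset.sum_eq_single i]
    · simp
    · intro j _ hj; simp [Pi.single_apply, hj]
    · intro hmem; exact absurd (Finset.mem_univ i) hmem
  have hnorm : (eU hB.1 *ᵥ Pi.single i 1) ⬝ᵥ (eU hB.1 *ᵥ Pi.single i 1) = 1 := by
    rw [dot_unitary _ (eU_left hB.1)]
    simp [dotProduct, Pi.single_apply]
  have habs := quad_abs B (eU hB.1 *ᵥ Pi.single i 1)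
  rw [hnorm, mul_one, h, hval] at habs
  exact le_trans (le_abs_self _) habs

lemma dot_self_pos {v : Fin n → ℝ} (hv : v ≠ 0) : 0 < v ⬝ᵥ v := by
  rcases Function.ne_iff.1 hv with ⟨i, hi⟩
  have hi' : v i ≠ 0 := by simpa using hi
  rw [dotProduct]
  exact Finset.sum_pos' (fun k _ => mul_self_nonneg _)
    ⟨i, Finset.mem_univ i, mul_self_pos.2 hi'⟩

end HerPowAux

open HerPowAux MeasureTheory Set Filter in
set_option maxHeartbeats 1000000 in
/-- if `t ↦ A(t)^p` (with `0 < p ≤ 1`) is differentiable at `t₀` with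
derivative `S`, and `A` is a family of symmetric positive definite matrices which is
differentiable at `t₀` with symmetric positive definite derivative `A′(t₀)`, then `S`
is positive definite. -/
theorem deriv_of_matrix_rpow_posDef {n : ℕ}
    (p : ℝ) (hp0 : 0 < p) (hp1 : p ≤ 1)
    (A : ℝ → Matrix (Fin n) (Fin n) ℝ)
    (hA : ∀ t : ℝ, (A t).PosDef)
    (t₀ : ℝ) (A' : Matrix (Fin n) (Fin n) ℝ)
    (hAdiff : ∀ i j : Fin n, HasDerivAt (fun t => A t i j) (A' i j) t₀)
    (hA'sym : A'.IsHermitian) (hA'pos : A'.PosDef)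
    (S : Matrix (Fin n) (Fin n) ℝ)
    (hSdiff : ∀ i j : Fin n,
      HasDerivAt (fun t => herPow (A t) (hA t).1 p i j) (S i j) t₀) :
    S.PosDef := by
  -- the `p = 1` case : `herPow (A t) = A t`, so `S = A'`.
  rcases eq_or_lt_of_le hp1 with hp1' | hp1'
  · subst hp1'
    have hident : ∀ t, herPow (A t) (hA t).1 1 = A t := by
      intro t
      rw [herPow_eq]
      have heig : (fun i => (hA t).1.eigenvalues i ^ (1:ℝ)) = (hA t).1.eigenvalues :=
        funext fun i => Real.rpow_one _
      rw [herPow', heig, ← spectral_real]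
    have hSA : S = A' := by
      ext i j
      refine HasDerivAt.unique ?_ (hAdiff i j)
      have h := hSdiff i j
      have hfun : (fun t => herPow (A t) (hA t).1 1 i j) = fun t => A t i j :=
        funext fun t => by rw [hident t]
      rwa [hfun] at h
    rw [hSA]; exact hA'pos
  -- the case `0 < p < 1`
  rcases Nat.eq_zero_or_pos n with hn | hn
  · subst hn
    refine ⟨?_, ?_⟩
    · ext i j; exact i.elim0
    · intro x hx
      exfalso; apply hx; ext i; exact i.elim0
  haveI : NeZero n := ⟨hn.ne'⟩
  haveI : Nonempty (Fin n) := ⟨⟨0, hn⟩⟩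
  -- Symmetry of S
  have hsymS : ∀ i j, S i j = S j i := by
    intro i j
    refine HasDerivAt.unique (hSdiff i j) ?_
    have h := hSdiff j i
    have hfun : (fun t => herPow (A t) (hA t).1 p j i)
        = fun t => herPow (A t) (hA t).1 p i j := by
      funext t
      have htr := herPow'_transpose (hA t).1 p
      calc herPow (A t) (hA t).1 p j i = herPow' (hA t).1 p j i := by rw [herPow_eq]
        _ = (herPow' (hA t).1 p)ᵀ i j := rfl
        _ = herPow' (hA t).1 p i j := by rw [htr]
        _ = herPow (A t) (hA t).1 p i j := by rw [herPow_eq]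
    rwa [hfun] at h
  have hSherm : S.IsHermitian := by
    ext i j
    simp [Matrix.conjTranspose_apply, hsymS i j]
  refine PosDef.of_dotProduct_mulVec_pos hSherm ?_
  intro v hv
  have hstar : (star v) = v := by funext i; simp
  rw [hstar]
  have hBpd := hA t₀
  set lam := hBpd.1.eigenvalues with hlam
  set w : Fin n → ℝ := (eU hBpd.1)ᵀ *ᵥ v with hw
  set Mb : ℝ := ∑ k, ∑ j, |A t₀ k j| with hMb
  have hMb0 : 0 < Mb := lt_of_lt_of_le (hBpd.eigenvalues_pos ⟨0, hn⟩) (eigen_le hBpd _)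
  set δ : ℝ := Finset.univ.inf' Finset.univ_nonempty hA'pos.1.eigenvalues with hδ
  have hδ0 : 0 < δ := by
    rw [hδ, Finset.lt_inf'_iff]
    exact fun i _ => hA'pos.eigenvalues_pos i
  have hδle : ∀ u : Fin n → ℝ, δ * (u ⬝ᵥ u) ≤ u ⬝ᵥ (A' *ᵥ u) := by
    intro u
    set a : Fin n → ℝ := (eU hA'pos.1)ᵀ *ᵥ u with ha
    have hu : u = eU hA'pos.1 *ᵥ a := (recover _ (eU_right hA'pos.1) u).symm
    have h1 : u ⬝ᵥ (A' *ᵥ u) = ∑ i, hA'pos.1.eigenvalues i * (a i)^2 := by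
      rw [hu]; exact quad_X hA'pos.1 a
    have h2 : u ⬝ᵥ u = ∑ i, (a i)^2 := by
      rw [hu, dot_unitary _ (eU_left hA'pos.1)]
      simp [dotProduct, pow_two]
    rw [h1, h2, Finset.mul_sum]
    refine Finset.sum_le_sum fun i _ => ?_
    have hle : δ ≤ hA'pos.1.eigenvalues i := Finset.inf'_le _ (Finset.mem_univ i)
    nlinarith [sq_nonneg (a i)]
  -- the function g and its derivative
  set g : ℝ → ℝ := fun t => v ⬝ᵥ (herPow (A t) (hA t).1 p *ᵥ v) with hgdef
  have hgderiv : HasDerivAt g (v ⬝ᵥ (S *ᵥ v)) t₀ := by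
    have hexp : ∀ t, g t = ∑ i, ∑ j, v i * herPow (A t) (hA t).1 p i j * v j := by
      intro t
      simp only [hgdef, dotProduct, mulVec]
      refine Finset.sum_congr rfl fun i _ => ?_
      rw [Finset.mul_sum]
      exact Finset.sum_congr rfl fun j _ => by ring
    have hSexp : v ⬝ᵥ (S *ᵥ v) = ∑ i, ∑ j, v i * S i j * v j := by
      simp only [dotProduct, mulVec]
      refine Finset.sum_congr rfl fun i _ => ?_
      rw [Finset.mul_sum]
      exact Finset.sum_congr rfl fun j _ => by ring
    rw [funext hexp, hSexp]
    exact HasDerivAt.fun_sum fun i _ => HasDerivAt.fun_sum fun j _ =>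
      ((hSdiff i j).const_mul (v i)).mul_const (v j)
  set c : ℝ := p * (Mb+1) ^ (p-1) with hc
  have hc0 : 0 < c := by
    rw [hc]
    have : (0:ℝ) < (Mb+1) ^ (p-1) := Real.rpow_pos_of_pos (by linarith) _
    positivity
  have hvv : 0 < v ⬝ᵥ v := dot_self_pos hv
  have hsw : ∑ i, (w i)^2 = v ⬝ᵥ v := by
    have h1 : ∑ i, (w i)^2 = w ⬝ᵥ w := by simp [dotProduct, pow_two]
    rw [h1, hw, dot_eU_t]
  have hvw : v = eU hBpd.1 *ᵥ w := (recover _ (eU_right hBpd.1) v).symm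
  have hgt₀ : g t₀ = ∑ i, lam i ^ p * (w i)^2 := by
    show v ⬝ᵥ (herPow (A t₀) (hA t₀).1 p *ᵥ v) = _
    rw [herPow_eq, hvw]
    exact quad_herPow hBpd.1 p w
  set η : ℝ := δ / (2*(n:ℝ)^2 + 1) with hη
  have hη0 : 0 < η := by
    rw [hη]
    exact div_pos hδ0 (by positivity)
  have hev1 : ∀ᶠ t in nhdsWithin t₀ (Ioi t₀), ∀ i j,
      |A t i j - A t₀ i j - (t - t₀) * A' i j| ≤ η * (t - t₀) := by
    rw [eventually_all]
    intro i
    rw [eventually_all]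
    intro j
    have htend : Tendsto (slope (fun u => A u i j) t₀) (nhdsWithin t₀ (Ioi t₀))
        (nhds (A' i j)) :=
      (hasDerivAt_iff_tendsto_slope.1 (hAdiff i j)).mono_left
        (nhdsWithin_mono _ fun x hx => ne_of_gt hx)
    have hball : ∀ᶠ t in nhdsWithin t₀ (Ioi t₀),
        dist (slope (fun u => A u i j) t₀ t) (A' i j) ≤ η :=
      htend.eventually (eventually_of_mem (Metric.closedBall_mem_nhds _ hη0)
        (fun y hy => Metric.mem_closedBall.1 hy))
    filter_upwards [hball, self_mem_nhdsWithin] with t hd hmem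
    have htt : t₀ < t := hmem
    have hdt : (0:ℝ) < t - t₀ := sub_pos.2 htt
    have hd' : |slope (fun u => A u i j) t₀ t - A' i j| ≤ η := by
      rwa [Real.dist_eq] at hd
    have hsl : slope (fun u => A u i j) t₀ t = (A t i j - A t₀ i j) / (t - t₀) := by
      rw [slope_def_field]
    rw [hsl] at hd'
    have heq : A t i j - A t₀ i j - (t - t₀) * A' i j
        = ((A t i j - A t₀ i j) / (t - t₀) - A' i j) * (t - t₀) := by
      field_simp
    rw [heq, abs_mul, abs_of_pos hdt]
    exact mul_le_mul_of_nonneg_right hd' hdt.le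
  have hev2 : ∀ᶠ t in nhdsWithin t₀ (Ioi t₀), t - t₀ ≤ 2/δ := by
    have hIoo : Ioo t₀ (t₀ + 2/δ) ∈ nhdsWithin t₀ (Ioi t₀) :=
      Ioo_mem_nhdsGT_of_mem ⟨le_refl t₀, by have := div_pos (by norm_num : (0:ℝ) < 2) hδ0; linarith⟩
    filter_upwards [hIoo] with t ht
    linarith [ht.2]
  have hslopebound : ∀ᶠ t in nhdsWithin t₀ (Ioi t₀),
      c * (δ/2) * (v ⬝ᵥ v) ≤ slope g t₀ t := by
    filter_upwards [hev1, hev2, self_mem_nhdsWithin] with t hE ht2 hmem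
    have htt : t₀ < t := hmem
    have hdt : (0:ℝ) < t - t₀ := sub_pos.2 htt
    set ε : ℝ := (δ/2) * (t - t₀) with hεdef
    have hε0 : 0 < ε := by rw [hεdef]; positivity
    have hε1 : ε ≤ 1 := by
      rw [hεdef]
      calc (δ/2) * (t - t₀) ≤ (δ/2) * (2/δ) :=
            mul_le_mul_of_nonneg_left ht2 (by positivity)
        _ = 1 := by field_simp
    have hcmp : ∀ u : Fin n → ℝ,
        u ⬝ᵥ (A t₀ *ᵥ u) + ε * (u ⬝ᵥ u) ≤ u ⬝ᵥ (A t *ᵥ u) := by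
      intro u
      have hquadE := quad_abs (A t - A t₀ - (t - t₀) • A') u
      have hEsum : (∑ i, ∑ j, |(A t - A t₀ - (t - t₀) • A') i j|)
          ≤ (δ/2) * (t - t₀) := by
        have hstep : (∑ i, ∑ j, |(A t - A t₀ - (t - t₀) • A') i j|)
            ≤ ∑ _i : Fin n, ∑ _j : Fin n, η * (t - t₀) := by
          refine Finset.sum_le_sum fun i _ => Finset.sum_le_sum fun j _ => ?_
          simpa [Matrix.sub_apply, Matrix.smul_apply, smul_eq_mul] using hE i j
        have hcard : ∑ _i : Fin n, ∑ _j : Fin n, η * (t - t₀)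
            = (n:ℝ)^2 * (η * (t - t₀)) := by
          simp [Finset.sum_const, Finset.card_univ]
          ring
        have h2n : (0:ℝ) < 2*(n:ℝ)^2 + 1 := by positivity
        have hkey2 : (n:ℝ)^2 * η ≤ δ/2 := by
          rw [hη, ← mul_div_assoc]
          rw [div_le_div_iff₀ h2n (by norm_num : (0:ℝ) < 2)]
          nlinarith [hδ0, sq_nonneg (n:ℝ)]
        have hfin : (n:ℝ)^2 * (η * (t - t₀)) ≤ (δ/2) * (t - t₀) := by
          calc (n:ℝ)^2 * (η * (t - t₀)) = ((n:ℝ)^2 * η) * (t - t₀) := by ring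
            _ ≤ (δ/2) * (t - t₀) := mul_le_mul_of_nonneg_right hkey2 hdt.le
        calc (∑ i, ∑ j, |(A t - A t₀ - (t - t₀) • A') i j|)
            ≤ ∑ _i : Fin n, ∑ _j : Fin n, η * (t - t₀) := hstep
          _ = (n:ℝ)^2 * (η * (t - t₀)) := hcard
          _ ≤ (δ/2) * (t - t₀) := hfin
      have hlin : u ⬝ᵥ (A t *ᵥ u) = u ⬝ᵥ (A t₀ *ᵥ u) + (t - t₀) * (u ⬝ᵥ (A' *ᵥ u))
          + u ⬝ᵥ ((A t - A t₀ - (t - t₀) • A') *ᵥ u) := by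
        rw [Matrix.sub_mulVec, Matrix.sub_mulVec, dotProduct_sub, dotProduct_sub,
          Matrix.smul_mulVec, dotProduct_smul, smul_eq_mul]
        ring
      have hA'bd := hδle u
      have huu : 0 ≤ u ⬝ᵥ u := by
        rcases eq_or_ne u 0 with h | h
        · simp [h]
        · exact (dot_self_pos h).le
      have hEl : -( (δ/2) * (t - t₀) * (u ⬝ᵥ u))
          ≤ u ⬝ᵥ ((A t - A t₀ - (t - t₀) • A') *ᵥ u) := by
        have h1 := neg_abs_le (u ⬝ᵥ ((A t - A t₀ - (t - t₀) • A') *ᵥ u))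
        have h2 : |u ⬝ᵥ ((A t - A t₀ - (t - t₀) • A') *ᵥ u)|
            ≤ (δ/2) * (t - t₀) * (u ⬝ᵥ u) := by
          refine le_trans hquadE ?_
          exact mul_le_mul_of_nonneg_right hEsum huu
        linarith
      rw [hlin, hεdef]
      nlinarith [hA'bd, hdt, huu]
    have hkey := key hp0 hp1' (hA t₀) (hA t) v hε0.le hcmp
    have hterm : ∀ i, lam i ^ p * (w i)^2 + (c * ε) * (w i)^2
        ≤ (lam i + ε) ^ p * (w i)^2 := by
      intro i
      have hgain := rpow_gain hp0 hp1' (hBpd.eigenvalues_pos i) (eigen_le hBpd i) hε0 hε1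
      rw [← hc] at hgain
      nlinarith [sq_nonneg (w i), hgain]
    have hgt : g t = v ⬝ᵥ (herPow' (hA t).1 p *ᵥ v) := by
      show v ⬝ᵥ (herPow (A t) (hA t).1 p *ᵥ v) = _
      rw [herPow_eq]
    have hsum : ∑ i, lam i ^ p * (w i)^2 + (c * ε) * (v ⬝ᵥ v)
        ≤ ∑ i, (lam i + ε) ^ p * (w i)^2 := by
      rw [← hsw, Finset.mul_sum, ← Finset.sum_add_distrib]
      exact Finset.sum_le_sum fun i _ => hterm i
    have hgtq : g t₀ + (c * ε) * (v ⬝ᵥ v) ≤ g t := by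
      rw [hgt₀, hgt]
      exact le_trans hsum hkey
    have hslval : slope g t₀ t = (g t - g t₀) / (t - t₀) := by rw [slope_def_field]
    rw [hslval, le_div_iff₀ hdt]
    have hεt : ε = (δ/2) * (t - t₀) := hεdef
    calc c * (δ/2) * (v ⬝ᵥ v) * (t - t₀) = (c * ε) * (v ⬝ᵥ v) := by rw [hεt]; ring
      _ ≤ g t - g t₀ := by linarith
  have hlim : Tendsto (slope g t₀) (nhdsWithin t₀ (Ioi t₀)) (nhds (v ⬝ᵥ (S *ᵥ v))) :=
    (hasDerivAt_iff_tendsto_slope.1 hgderiv).mono_left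
      (nhdsWithin_mono _ fun x hx => ne_of_gt hx)
  have hge : c * (δ/2) * (v ⬝ᵥ v) ≤ v ⬝ᵥ (S *ᵥ v) := ge_of_tendsto hlim hslopebound
  have : 0 < c * (δ/2) * (v ⬝ᵥ v) := by positivity
  linarith
end
end
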